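/- arXiv:0810.2157 — 2 statements merged into one kernel-verified Lean document; each statement's English description precedes it below -/
import Mathlib

section
/- Let 𝒜 be a finite irreducible set of real d×d matrices with p-measure of irreducibility χ_p(𝒜) > 0, and suppose there exist matrices A_{i₁},…,A_{iₙ} ∈ 𝒜 and x* ≠ 0 with ‖A_{iₙ}⋯A_{i₁} x*‖ ≥ μ η_p(𝒜) ρ(𝒜)ⁿ ‖x*‖ for some μ > 1. Then there exists a sequence of products H_k of matrices from 𝒜 with len(H_k) → ∞ and ‖H_k‖ ≥ (η ρ(𝒜))^{len(H_k)} for all k, where η = μ^{1/(n+p)} > 1. -/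
open Filter Set

/-- The set of all products of exactly `n` matrices from `𝒜`. -/
def prods {d : ℕ} (𝒜 : Set (Matrix (Fin d) (Fin d) ℝ)) (n : ℕ) :
    Set (Matrix (Fin d) (Fin d) ℝ) :=
  {P | ∃ l : List (Matrix (Fin d) (Fin d) ℝ), l.length = n ∧ (∀ A ∈ l, A ∈ 𝒜) ∧ l.prod = P}

/-- `‖𝒜ⁿ‖`: the supremum of the norm `N` over all `n`-fold products from `𝒜`. -/
noncomputable def supN {d : ℕ} (N : Matrix (Fin d) (Fin d) ℝ → ℝ)
    (𝒜 : Set (Matrix (Fin d) (Fin d) ℝ)) (n : ℕ) : ℝ :=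
  sSup (N '' prods 𝒜 n)

/-- The joint spectral radius of `𝒜` with respect to the matrix norm `N`,
given by the generalized Gelfand formula. -/
noncomputable def jsr {d : ℕ} (N : Matrix (Fin d) (Fin d) ℝ → ℝ)
    (𝒜 : Set (Matrix (Fin d) (Fin d) ℝ)) : ℝ :=
  Filter.limsup (fun n : ℕ => (supN N 𝒜 n) ^ ((n : ℝ)⁻¹)) Filter.atTop

/-- A (matrix) norm: nonnegative, definite, absolutely homogeneous, subadditive. -/
def IsMatNorm {d : ℕ} (N : Matrix (Fin d) (Fin d) ℝ → ℝ) : Prop :=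
  (∀ A, 0 ≤ N A) ∧ (∀ A, N A = 0 ↔ A = 0) ∧
  (∀ (c : ℝ) A, N (c • A) = |c| * N A) ∧ (∀ A B, N (A + B) ≤ N A + N B)

/-- Products of at most `p` factors from `𝒜` (including the empty product `1`). -/
def prodsLe {d : ℕ} (𝒜 : Set (Matrix (Fin d) (Fin d) ℝ)) (p : ℕ) :
    Set (Matrix (Fin d) (Fin d) ℝ) :=
  ⋃ k ∈ Finset.range (p + 1), prods 𝒜 k

/-- A vector norm on `ℝ^d`: nonnegative, definite, absolutely homogeneous, subadditive. -/
def IsNorm {d : ℕ} (ν : (Fin d → ℝ) → ℝ) : Prop :=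
  (∀ x, 0 ≤ ν x) ∧ (∀ x, ν x = 0 ↔ x = 0) ∧
  (∀ (a : ℝ) x, ν (a • x) = |a| * ν x) ∧ (∀ x y, ν (x + y) ≤ ν x + ν y)

/-- Operator norm of a matrix induced by the vector norm `ν` on `ℝ^d`. -/
noncomputable def opNorm {d : ℕ} (ν : (Fin d → ℝ) → ℝ)
    (A : Matrix (Fin d) (Fin d) ℝ) : ℝ :=
  sSup ((fun x => ν (A.mulVec x)) '' {x | ν x = 1})

/-- `‖𝒜ⁿ‖` computed with the operator norm induced by `ν`. -/
noncomputable def supNu {d : ℕ} (ν : (Fin d → ℝ) → ℝ)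
    (𝒜 : Set (Matrix (Fin d) (Fin d) ℝ)) (n : ℕ) : ℝ :=
  supN (opNorm ν) 𝒜 n

/-- The joint spectral radius computed with the operator norm induced by `ν`. -/
noncomputable def jsrNu {d : ℕ} (ν : (Fin d → ℝ) → ℝ)
    (𝒜 : Set (Matrix (Fin d) (Fin d) ℝ)) : ℝ :=
  jsr (opNorm ν) 𝒜

/-- The `p`-measure of irreducibility (quasi-controllability) of `𝒜`
with respect to the vector norm `ν`:
`χ_p(𝒜) = inf_{ν x = 1} sup { t : S(t) ⊆ conv(𝒜_p(x) ∪ 𝒜_p(−x)) }`. -/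
noncomputable def chi {d : ℕ} (ν : (Fin d → ℝ) → ℝ)
    (𝒜 : Set (Matrix (Fin d) (Fin d) ℝ)) (p : ℕ) : ℝ :=
  sInf ((fun x => sSup {t : ℝ | 0 ≤ t ∧
      {y | ν y ≤ t} ⊆ convexHull ℝ
        (((fun A => A.mulVec x) '' prodsLe 𝒜 p) ∪
         ((fun A => A.mulVec (-x)) '' prodsLe 𝒜 p))}) '' {x | ν x = 1})

/-- `𝒜` is irreducible: the only common invariant subspaces are `⊥` and `⊤`. -/
def MatSetIrreducible {d : ℕ} (𝒜 : Set (Matrix (Fin d) (Fin d) ℝ)) : Prop :=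
  ∀ L : Submodule ℝ (Fin d → ℝ), (∀ A ∈ 𝒜, ∀ x ∈ L, A.mulVec x ∈ L) → L = ⊥ ∨ L = ⊤

namespace S12


variable {d : ℕ} {ν : (Fin d → ℝ) → ℝ}

lemma nu_zero (hν : IsNorm ν) : ν 0 = 0 := (hν.2.1 0).2 rfl

lemma nu_pos (hν : IsNorm ν) {x : Fin d → ℝ} (hx : x ≠ 0) : 0 < ν x :=
  lt_of_le_of_ne (hν.1 x) fun h => hx ((hν.2.1 x).1 h.symm)

lemma nu_neg (hν : IsNorm ν) (x : Fin d → ℝ) : ν (-x) = ν x := by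
  have := hν.2.2.1 (-1) x
  simpa using this

lemma nu_sum_le (hν : IsNorm ν) {ι : Type*} (s : Finset ι) (f : ι → Fin d → ℝ) :
    ν (∑ i ∈ s, f i) ≤ ∑ i ∈ s, ν (f i) := by
  classical
  induction s using Finset.induction_on with
  | empty => simp [nu_zero hν]
  | insert _ _ h ih =>
    rename_i a s
    rw [Finset.sum_insert h, Finset.sum_insert h]
    exact le_trans (hν.2.2.2 _ _) (by linarith)

lemma nu_le_C (hν : IsNorm ν) : ∃ C : ℝ, 0 ≤ C ∧ ∀ x, ν x ≤ C * ‖x‖ := by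
  classical
  refine ⟨∑ i : Fin d, ν (fun j => if i = j then 1 else 0), Finset.sum_nonneg fun i _ => hν.1 _, fun x => ?_⟩
  calc ν x = ν (∑ i : Fin d, (x i) • fun j => if i = j then (1:ℝ) else 0) := by
        rw [← pi_eq_sum_univ x]
    _ ≤ ∑ i : Fin d, ν ((x i) • fun j => if i = j then (1:ℝ) else 0) := nu_sum_le hν _ _
    _ ≤ ∑ i : Fin d, ‖x‖ * ν (fun j => if i = j then (1:ℝ) else 0) := by
        refine Finset.sum_le_sum fun i _ => ?_
        rw [hν.2.2.1]
        have h1 : |x i| ≤ ‖x‖ := by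
          have := norm_le_pi_norm x i
          simpa [Real.norm_eq_abs] using this
        exact mul_le_mul_of_nonneg_right h1 (hν.1 _)
    _ = (∑ i : Fin d, ν (fun j => if i = j then (1:ℝ) else 0)) * ‖x‖ := by
        rw [← Finset.mul_sum, mul_comm]

lemma nu_continuous (hν : IsNorm ν) : Continuous ν := by
  obtain ⟨C, hC0, hC⟩ := nu_le_C hν
  have : LipschitzWith (Real.toNNReal C) ν := by
    apply LipschitzWith.of_dist_le_mul
    intro x y
    have key : ∀ a b : Fin d → ℝ, ν a - ν b ≤ C * ‖a - b‖ := by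
      intro a b
      have h1 : ν a ≤ ν b + ν (a - b) := by
        have := hν.2.2.2 b (a - b)
        simpa using this
      have := hC (a - b)
      linarith
    rw [Real.dist_eq, dist_eq_norm]
    rw [abs_sub_le_iff]
    constructor
    · simpa [Real.coe_toNNReal C hC0] using key x y
    · have := key y x
      rw [Real.coe_toNNReal C hC0]
      rwa [← norm_neg, neg_sub] at this
  exact this.continuous

lemma nu_ge_c (hν : IsNorm ν) (hd : ∃ x : Fin d → ℝ, x ≠ 0) :
    ∃ c : ℝ, 0 < c ∧ ∀ x, c * ‖x‖ ≤ ν x := by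
  obtain ⟨x₀, hx₀⟩ := hd
  have hsne : (Metric.sphere (0 : Fin d → ℝ) 1).Nonempty := by
    refine ⟨‖x₀‖⁻¹ • x₀, ?_⟩
    simp [norm_smul, abs_of_nonneg (inv_nonneg.2 (norm_nonneg x₀)),
      inv_mul_cancel₀ (norm_ne_zero_iff.2 hx₀)]
  obtain ⟨u₀, hu₀m, hu₀min⟩ :=
    (isCompact_sphere (0 : Fin d → ℝ) 1).exists_isMinOn hsne (nu_continuous hν).continuousOn
  have hu₀ : ‖u₀‖ = 1 := by simpa using hu₀m
  have hc : 0 < ν u₀ := nu_pos hν (by intro h; rw [h] at hu₀; simp at hu₀)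
  refine ⟨ν u₀, hc, fun x => ?_⟩
  rcases eq_or_ne x 0 with rfl | hx
  · simp [nu_zero hν]
  · have hxn : (0:ℝ) < ‖x‖ := norm_pos_iff.2 hx
    have hmem : ‖x‖⁻¹ • x ∈ Metric.sphere (0 : Fin d → ℝ) 1 := by
      simp [norm_smul, abs_of_nonneg (inv_nonneg.2 (norm_nonneg x)), inv_mul_cancel₀ hxn.ne']
    have h1 : ν u₀ ≤ ν (‖x‖⁻¹ • x) := hu₀min hmem
    have h2 : ν (‖x‖⁻¹ • x) = ‖x‖⁻¹ * ν x := by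
      rw [hν.2.2.1, abs_of_nonneg (inv_nonneg.2 (norm_nonneg x))]
    rw [h2] at h1
    calc ν u₀ * ‖x‖ ≤ (‖x‖⁻¹ * ν x) * ‖x‖ := by
          exact mul_le_mul_of_nonneg_right h1 (norm_nonneg x)
      _ = ν x := by field_simp


lemma prods_finite {d : ℕ} (𝒜 : Finset (Matrix (Fin d) (Fin d) ℝ)) (k : ℕ) :
    (prods (𝒜 : Set (Matrix (Fin d) (Fin d) ℝ)) k).Finite := by
  induction k with
  | zero =>
    refine Set.Finite.subset (Set.finite_singleton 1) ?_
    rintro P ⟨l, hl, -, hp⟩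
    rw [List.length_eq_zero_iff] at hl
    simp [← hp, hl]
  | succ k ih =>
    refine Set.Finite.subset (((𝒜.finite_toSet).prod ih).image fun q => q.1 * q.2) ?_
    rintro P ⟨l, hl, hmem, hp⟩
    match l with
    | A :: l' =>
      refine ⟨⟨A, l'.prod⟩, ⟨hmem A (by simp), ⟨l', by simpa using hl, fun B hB => hmem B (by simp [hB]), rfl⟩⟩, ?_⟩
      simp [← hp]

lemma prodsLe_finite {d : ℕ} (𝒜 : Finset (Matrix (Fin d) (Fin d) ℝ)) (p : ℕ) :
    (prodsLe (𝒜 : Set (Matrix (Fin d) (Fin d) ℝ)) p).Finite := by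
  refine Set.Finite.biUnion ?_ fun k _ => prods_finite 𝒜 k
  exact (Finset.range (p + 1)).finite_toSet

lemma one_mem_prodsLe {d : ℕ} (𝒜 : Set (Matrix (Fin d) (Fin d) ℝ)) (p : ℕ) :
    (1 : Matrix (Fin d) (Fin d) ℝ) ∈ prodsLe 𝒜 p := by
  refine Set.mem_biUnion (Finset.mem_range.2 (Nat.succ_pos p)) ?_
  exact ⟨[], rfl, by simp, rfl⟩

lemma mem_prodsLe {d : ℕ} {𝒜 : Set (Matrix (Fin d) (Fin d) ℝ)} {p : ℕ}
    {B : Matrix (Fin d) (Fin d) ℝ} (hB : B ∈ prodsLe 𝒜 p) :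
    ∃ l : List (Matrix (Fin d) (Fin d) ℝ), l.length ≤ p ∧ (∀ A ∈ l, A ∈ 𝒜) ∧ l.prod = B := by
  obtain ⟨k, hk, l, hl, hmem, hp⟩ := Set.mem_iUnion₂.1 hB
  have : k ≤ p := Nat.lt_succ_iff.1 (Finset.mem_range.1 hk)
  exact ⟨l, by omega, hmem, hp⟩



variable {d : ℕ} {ν : (Fin d → ℝ) → ℝ}

lemma opNorm_nonneg (hν : IsNorm ν) (A : Matrix (Fin d) (Fin d) ℝ) : 0 ≤ opNorm ν A :=
  Real.sSup_nonneg (by rintro y ⟨x, -, rfl⟩; exact hν.1 _)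

lemma opNorm_bddAbove (hν : IsNorm ν) (hd : ∃ x : Fin d → ℝ, x ≠ 0)
    (A : Matrix (Fin d) (Fin d) ℝ) :
    BddAbove ((fun x => ν (A.mulVec x)) '' {x | ν x = 1}) := by
  obtain ⟨C, hC0, hC⟩ := nu_le_C hν
  obtain ⟨c, hc0, hc⟩ := nu_ge_c hν hd
  set L := LinearMap.toContinuousLinearMap (Matrix.mulVecLin A) with hL
  refine ⟨C * (‖L‖ * c⁻¹), ?_⟩
  rintro y ⟨x, hx, rfl⟩
  have hx1 : ν x = 1 := hx
  have hxle : ‖x‖ ≤ c⁻¹ := by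
    have h := hc x
    rw [hx1] at h
    calc ‖x‖ = c⁻¹ * (c * ‖x‖) := by field_simp
      _ ≤ c⁻¹ * 1 := mul_le_mul_of_nonneg_left h (inv_nonneg.2 hc0.le)
      _ = c⁻¹ := mul_one _
  have h1 : ν (A.mulVec x) ≤ C * ‖A.mulVec x‖ := hC _
  have h2 : ‖A.mulVec x‖ = ‖L x‖ := by
    rw [hL]
    congr 1
  have h3 : ‖L x‖ ≤ ‖L‖ * ‖x‖ := L.le_opNorm x
  calc ν (A.mulVec x) ≤ C * ‖A.mulVec x‖ := h1
    _ = C * ‖L x‖ := by rw [h2]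
    _ ≤ C * (‖L‖ * ‖x‖) := by gcongr
    _ ≤ C * (‖L‖ * c⁻¹) := by gcongr

lemma nu_mulVec_le (hν : IsNorm ν) (hd : ∃ x : Fin d → ℝ, x ≠ 0)
    (A : Matrix (Fin d) (Fin d) ℝ) (x : Fin d → ℝ) :
    ν (A.mulVec x) ≤ opNorm ν A * ν x := by
  rcases eq_or_ne x 0 with rfl | hx
  · simp [Matrix.mulVec_zero, nu_zero hν]
  · have hνx := nu_pos hν hx
    set u := (ν x)⁻¹ • x with hu
    have hνu : ν u = 1 := by
      rw [hu, hν.2.2.1, abs_of_nonneg (inv_nonneg.2 (hν.1 x)), inv_mul_cancel₀ hνx.ne']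
    have h1 : ν (A.mulVec u) ≤ opNorm ν A :=
      le_csSup (opNorm_bddAbove hν hd A) ⟨u, hνu, rfl⟩
    have h2 : A.mulVec x = (ν x) • A.mulVec u := by
      rw [hu, Matrix.mulVec_smul, smul_smul, mul_inv_cancel₀ hνx.ne', one_smul]
    rw [h2, hν.2.2.1, abs_of_nonneg (hν.1 x)]
    rw [mul_comm (opNorm ν A) (ν x)]
    exact mul_le_mul_of_nonneg_left h1 (hν.1 x)

lemma convex_nuBall (hν : IsNorm ν) (t : ℝ) : Convex ℝ {y | ν y ≤ t} := by
  intro x hx y hy a b ha hb hab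
  have h1 : ν (a • x + b • y) ≤ ν (a • x) + ν (b • y) := hν.2.2.2 _ _
  rw [hν.2.2.1, hν.2.2.1, abs_of_nonneg ha, abs_of_nonneg hb] at h1
  have hx' : ν x ≤ t := hx
  have hy' : ν y ≤ t := hy
  have : a * ν x + b * ν y ≤ a * t + b * t := by
    have := mul_le_mul_of_nonneg_left hx' ha
    have := mul_le_mul_of_nonneg_left hy' hb
    linarith
  have heq : a * t + b * t = t := by rw [← add_mul, hab, one_mul]
  simp only [Set.mem_setOf_eq]
  linarith

lemma exists_dual (hν : IsNorm ν) {w : Fin d → ℝ} (hw : w ≠ 0) :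
    ∃ g : (Fin d → ℝ) →ₗ[ℝ] ℝ, (∀ z, g z ≤ ν z) ∧ g w = ν w := by
  set f := LinearPMap.mkSpanSingleton (K := ℝ) (L := ℝ) (σ := RingHom.id ℝ) w (ν w) hw with hf
  have hfle : ∀ x : f.domain, f x ≤ ν x := by
    rintro ⟨z, hz⟩
    obtain ⟨c, rfl⟩ := Submodule.mem_span_singleton.1 hz
    have h1 : f ⟨c • w, hz⟩ = c • (ν w) := by
      apply LinearPMap.mkSpanSingleton'_apply
    rw [h1, smul_eq_mul, hν.2.2.1]
    exact mul_le_mul_of_nonneg_right (le_abs_self c) (hν.1 w)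
  obtain ⟨g, hg1, hg2⟩ := exists_extension_of_le_sublinear f ν
    (fun c hc x => by rw [hν.2.2.1, abs_of_pos hc]) hν.2.2.2 hfle
  refine ⟨g, hg2, ?_⟩
  have h2 := hg1 ⟨w, Submodule.mem_span_singleton_self w⟩
  rw [h2, LinearPMap.mkSpanSingleton_apply]



variable {d : ℕ} {ν : (Fin d → ℝ) → ℝ}

lemma chi_ball_subset (𝒜 : Finset (Matrix (Fin d) (Fin d) ℝ)) (hν : IsNorm ν) (p : ℕ)
    {u : Fin d → ℝ} (hu : ν u = 1) :
    {y | ν y ≤ chi ν (𝒜 : Set (Matrix (Fin d) (Fin d) ℝ)) p} ⊆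
      convexHull ℝ
        (((fun A => A.mulVec u) '' prodsLe (𝒜 : Set (Matrix (Fin d) (Fin d) ℝ)) p) ∪
         ((fun A => A.mulVec (-u)) '' prodsLe (𝒜 : Set (Matrix (Fin d) (Fin d) ℝ)) p)) := by
  classical
  set 𝒜s := (𝒜 : Set (Matrix (Fin d) (Fin d) ℝ)) with h𝒜s
  set S : (Fin d → ℝ) → Set (Fin d → ℝ) := fun x =>
    ((fun A => A.mulVec x) '' prodsLe 𝒜s p) ∪ ((fun A => A.mulVec (-x)) '' prodsLe 𝒜s p) with hSdef
  set T : (Fin d → ℝ) → Set ℝ := fun x =>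
    {t : ℝ | 0 ≤ t ∧ {y | ν y ≤ t} ⊆ convexHull ℝ (S x)} with hTdef
  have hSfin : ∀ x, (S x).Finite := fun x =>
    ((prodsLe_finite 𝒜 p).image _).union ((prodsLe_finite 𝒜 p).image _)
  have hxS : ∀ x, x ∈ S x := fun x =>
    Or.inl ⟨1, one_mem_prodsLe 𝒜s p, Matrix.one_mulVec x⟩
  have hnxS : ∀ x, -x ∈ S x := fun x =>
    Or.inr ⟨1, one_mem_prodsLe 𝒜s p, Matrix.one_mulVec (-x)⟩
  have h0T : ∀ x, 0 ∈ T x := by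
    intro x
    refine ⟨le_refl 0, fun y hy => ?_⟩
    have hy0 : y = 0 := (hν.2.1 y).1 (le_antisymm hy (hν.1 y))
    have h0 : (0 : Fin d → ℝ) ∈ convexHull ℝ (S x) := by
      have hmem := (convex_convexHull ℝ (S x))
        (subset_convexHull ℝ (S x) (hxS x)) (subset_convexHull ℝ (S x) (hnxS x))
        (by norm_num : (0:ℝ) ≤ (1:ℝ)/2) (by norm_num : (0:ℝ) ≤ (1:ℝ)/2) (by norm_num)
      have : ((1:ℝ)/2) • x + ((1:ℝ)/2) • (-x) = 0 := by
        rw [smul_neg, add_neg_cancel]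
      rwa [this] at hmem
    rwa [hy0]
  have hbddT : ∀ x, ν x = 1 → BddAbove (T x) := by
    intro x hx
    obtain ⟨v, hv, hvmax⟩ := Set.exists_max_image (S x) ν (hSfin x) ⟨x, hxS x⟩
    refine ⟨ν v, fun t ht => ?_⟩
    have h1 : t • x ∈ {y | ν y ≤ t} := by
      simp only [Set.mem_setOf_eq, hν.2.2.1, hx, mul_one, abs_of_nonneg ht.1, le_refl]
    have h2 : t • x ∈ convexHull ℝ (S x) := ht.2 h1
    have h3 : convexHull ℝ (S x) ⊆ {y | ν y ≤ ν v} :=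
      convexHull_min (fun s hs => hvmax s hs) (convex_nuBall hν (ν v))
    have h4 : ν (t • x) ≤ ν v := h3 h2
    rwa [hν.2.2.1, hx, mul_one, abs_of_nonneg ht.1] at h4
  have hchile : chi ν 𝒜s p ≤ sSup (T u) := by
    apply csInf_le
    · refine ⟨0, ?_⟩
      rintro s ⟨x, hx, rfl⟩
      exact le_csSup (hbddT x hx) (h0T x)
    · exact ⟨u, hu, rfl⟩
  have hballs : {y | ν y ≤ sSup (T u)} ⊆ convexHull ℝ (S u) := by
    have hTne : (T u).Nonempty := ⟨0, h0T u⟩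
    have hs0 : 0 ≤ sSup (T u) := le_csSup (hbddT u hu) (h0T u)
    have hlt : ∀ z : Fin d → ℝ, ν z < sSup (T u) → z ∈ convexHull ℝ (S u) := by
      intro z hz
      obtain ⟨t', ht'T, hlt'⟩ := exists_lt_of_lt_csSup hTne hz
      exact ht'T.2 (le_of_lt hlt')
    intro y hy
    have hy' : ν y ≤ sSup (T u) := hy
    rcases lt_or_eq_of_le hy' with h | h
    · exact hlt y h
    · rcases eq_or_lt_of_le hs0 with h0 | h0
      · -- sSup = 0, so ν y = 0 and y = 0
        exact (h0T u).2 (by rw [← h0] at h; exact le_of_eq h)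
      · -- approximate y from inside
        have hclosed : IsClosed (convexHull ℝ (S u)) :=
          ((hSfin u).isCompact_convexHull (𝕜 := ℝ)).isClosed
        have hmem : ∀ k : ℕ, (1 - 1/((k:ℝ)+1)) • y ∈ convexHull ℝ (S u) := by
          intro k
          apply hlt
          have hk1 : (0:ℝ) < (k:ℝ) + 1 := by positivity
          have hθ0 : (0:ℝ) ≤ 1 - 1/((k:ℝ)+1) := by
            rw [sub_nonneg, div_le_one hk1]
            linarith
          have hθ1 : 1 - 1/((k:ℝ)+1) < 1 := by
            have : (0:ℝ) < 1/((k:ℝ)+1) := by positivity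
            linarith
          rw [hν.2.2.1, abs_of_nonneg hθ0, h]
          calc (1 - 1/((k:ℝ)+1)) * sSup (T u) < 1 * sSup (T u) :=
                mul_lt_mul_of_pos_right hθ1 h0
            _ = sSup (T u) := one_mul _
        have htend : Tendsto (fun k : ℕ => (1 - 1/((k:ℝ)+1)) • y) atTop (nhds y) := by
          have h1 : Tendsto (fun k : ℕ => 1 - 1/((k:ℝ)+1)) atTop (nhds 1) := by
            have := tendsto_one_div_add_atTop_nhds_zero_nat (𝕜 := ℝ)
            have h2 := this.const_sub 1
            simpa using h2
          have h3 := h1.smul_const y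
          rwa [one_smul] at h3
        exact hclosed.mem_of_tendsto htend (Filter.Eventually.of_forall hmem)
  exact fun y hy => hballs (le_trans hy hchile)


end S12

open S12

/-- if some `n`-fold product satisfies
`‖A_{iₙ}⋯A_{i₁} x*‖ ≥ μ η_p(𝒜) ρ(𝒜)ⁿ ‖x*‖` with `μ > 1`, then there are products `H_k`
from `𝒜` with `len(H_k) → ∞` and `‖H_k‖ ≥ (η ρ(𝒜))^{len(H_k)}`, where
`η = μ^{1/(n+p)} > 1`. -/
theorem statement12 {d : ℕ} (𝒜 : Finset (Matrix (Fin d) (Fin d) ℝ)) (h𝒜 : 𝒜.Nonempty)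
    (ν : (Fin d → ℝ) → ℝ) (hν : IsNorm ν)
    (p : ℕ) (hp : d - 1 ≤ p)
    (hirr : MatSetIrreducible (↑𝒜 : Set (Matrix (Fin d) (Fin d) ℝ)))
    (hchi : 0 < chi ν (↑𝒜 : Set (Matrix (Fin d) (Fin d) ℝ)) p)
    (n : ℕ) (hn : 1 ≤ n) (μ : ℝ) (hμ : 1 < μ)
    (xstar : Fin d → ℝ) (hxstar : xstar ≠ 0)
    (lA : List (Matrix (Fin d) (Fin d) ℝ)) (hlA : ∀ A ∈ lA, A ∈ 𝒜)
    (hlen : lA.length = n)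
    (hbig : μ * (max 1 ((jsrNu ν (↑𝒜 : Set (Matrix (Fin d) (Fin d) ℝ))) ^ p) /
          chi ν (↑𝒜 : Set (Matrix (Fin d) (Fin d) ℝ)) p) *
        (jsrNu ν (↑𝒜 : Set (Matrix (Fin d) (Fin d) ℝ))) ^ n * ν xstar ≤
        ν (lA.prod.mulVec xstar)) :
    1 < μ ^ (((n : ℝ) + p)⁻¹) ∧
    ∃ H : ℕ → List (Matrix (Fin d) (Fin d) ℝ),
      (∀ k, ∀ A ∈ H k, A ∈ 𝒜) ∧
      Filter.Tendsto (fun k => (H k).length) Filter.atTop Filter.atTop ∧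
      ∀ k, (μ ^ (((n : ℝ) + p)⁻¹) *
              jsrNu ν (↑𝒜 : Set (Matrix (Fin d) (Fin d) ℝ))) ^ (H k).length ≤
        opNorm ν ((H k).prod) := by
  classical
  set ρ := jsrNu ν (↑𝒜 : Set (Matrix (Fin d) (Fin d) ℝ)) with hρdef
  set χ := chi ν (↑𝒜 : Set (Matrix (Fin d) (Fin d) ℝ)) p with hχdef
  have hμ0 : (0:ℝ) < μ := lt_trans one_pos hμ
  have hn1 : (1:ℝ) ≤ (n:ℝ) := by exact_mod_cast hn
  have hnp : (0:ℝ) < (n:ℝ) + p := by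
    have : (0:ℝ) ≤ (p:ℝ) := Nat.cast_nonneg p
    linarith
  set η := μ ^ (((n : ℝ) + p)⁻¹) with hηdef
  have hη : 1 < η := by
    rw [hηdef, Real.one_lt_rpow_iff_of_pos hμ0]
    exact Or.inl ⟨hμ, inv_pos.2 hnp⟩
  refine ⟨hη, ?_⟩
  have hη0 : (0:ℝ) < η := lt_trans one_pos hη
  have hνx : 0 < ν xstar := nu_pos hν hxstar
  have hd0 : ∃ x : Fin d → ℝ, x ≠ 0 := ⟨xstar, hxstar⟩
  by_cases hρpos : 0 < ρ
  swap
  · -- degenerate branch : ρ ≤ 0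
    obtain ⟨A₀, hA₀⟩ := h𝒜
    refine ⟨fun k => List.replicate (2*k+1) A₀, ?_, ?_, ?_⟩
    · intro k A hA
      rw [List.eq_of_mem_replicate hA]; exact hA₀
    · simp only [List.length_replicate]
      apply tendsto_atTop_mono (fun k => by omega : ∀ k : ℕ, k ≤ 2*k+1)
      exact tendsto_id
    · intro k
      simp only [List.length_replicate]
      have h1 : η * ρ ≤ 0 := mul_nonpos_of_nonneg_of_nonpos hη0.le (not_lt.1 hρpos)
      have h2 : (η*ρ)^(2*k+1) ≤ 0 := Odd.pow_nonpos ⟨k, by ring⟩ h1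
      exact le_trans h2 (opNorm_nonneg hν _)
  · -- main branch : ρ > 0
    set P := lA.prod with hPdef
    have hEpos : (0:ℝ) < max 1 (ρ^p) := lt_of_lt_of_le one_pos (le_max_left _ _)
    have hLHSpos : 0 < μ * (max 1 (ρ^p) / χ) * ρ^n * ν xstar := by
      have h1 : 0 < max 1 (ρ^p) / χ := div_pos hEpos hchi
      have h2 : 0 < ρ^n := pow_pos hρpos n
      positivity
    have hw₀ : 0 < ν (P.mulVec xstar) := lt_of_lt_of_le hLHSpos hbig
    have hw₀ne : P.mulVec xstar ≠ 0 := by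
      intro h
      rw [h, nu_zero hν] at hw₀
      exact lt_irrefl 0 hw₀
    set r := ν (P.mulVec xstar) / ν xstar with hrdef
    have hrpos : 0 < r := div_pos hw₀ hνx
    have hrge : μ * (max 1 (ρ^p) / χ) * ρ^n ≤ r := by
      rw [hrdef, le_div_iff₀ hνx]; exact hbig
    obtain ⟨g, hg, hgw⟩ := exists_dual hν hw₀ne
    -- the quasi-controllability step
    have key : ∀ w : Fin d → ℝ, w ≠ 0 →
        ∃ lB : List (Matrix (Fin d) (Fin d) ℝ), (∀ A ∈ lB, A ∈ 𝒜) ∧ lB.length ≤ p ∧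
          χ * r * ν w ≤ ν ((P * lB.prod).mulVec w) := by
      intro w hw
      have hνw : 0 < ν w := nu_pos hν hw
      set u := (ν w)⁻¹ • w with hudef
      have hνu : ν u = 1 := by
        rw [hudef, hν.2.2.1, abs_of_nonneg (inv_nonneg.2 (hν.1 w)), inv_mul_cancel₀ hνw.ne']
      set S : Set (Fin d → ℝ) :=
        ((fun A => A.mulVec u) '' prodsLe (↑𝒜 : Set (Matrix (Fin d) (Fin d) ℝ)) p) ∪
        ((fun A => A.mulVec (-u)) '' prodsLe (↑𝒜 : Set (Matrix (Fin d) (Fin d) ℝ)) p) with hSdef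
      have hSfin : S.Finite :=
        ((prodsLe_finite 𝒜 p).image _).union ((prodsLe_finite 𝒜 p).image _)
      have hSne : S.Nonempty :=
        ⟨u, Or.inl ⟨1, one_mem_prodsLe _ p, Matrix.one_mulVec u⟩⟩
      set φ : (Fin d → ℝ) → ℝ := fun y => g (P.mulVec y) with hφdef
      have hφlin : IsLinearMap ℝ φ := by
        constructor
        · intro a b; simp only [hφdef, Matrix.mulVec_add, map_add]
        · intro c a; simp only [hφdef, Matrix.mulVec_smul, map_smul, smul_eq_mul]
      obtain ⟨v, hvS, hvmax⟩ := Set.exists_max_image S φ hSfin hSne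
      have hconv : convexHull ℝ S ⊆ {y | φ y ≤ φ v} :=
        convexHull_min (fun s hs => hvmax s hs) (convex_halfSpace_le hφlin _)
      -- the test point
      have hzball : ν ((χ / ν xstar) • xstar) ≤ χ := by
        rw [hν.2.2.1, abs_of_nonneg (div_nonneg hchi.le hνx.le), div_mul_cancel₀ _ hνx.ne']
      have hzconv := chi_ball_subset 𝒜 hν p hνu hzball
      have hφv : χ * r ≤ φ v := by
        have h1 : φ ((χ / ν xstar) • xstar) ≤ φ v := hconv (hzconv)
        have h2 : φ ((χ / ν xstar) • xstar) = (χ / ν xstar) * ν (P.mulVec xstar) := by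
          rw [hφdef]
          simp only [Matrix.mulVec_smul, map_smul, smul_eq_mul, hgw]
        rw [h2] at h1
        have h3 : (χ / ν xstar) * ν (P.mulVec xstar) = χ * r := by
          rw [hrdef]; ring
        rwa [h3] at h1
      -- identify v as product image
      have hmain : ∃ B ∈ prodsLe (↑𝒜 : Set (Matrix (Fin d) (Fin d) ℝ)) p,
          χ * r ≤ ν ((P * B).mulVec u) := by
        rcases hvS with ⟨B, hB, rfl⟩ | ⟨B, hB, rfl⟩
        · refine ⟨B, hB, ?_⟩
          have h4 : φ (B.mulVec u) ≤ ν (P.mulVec (B.mulVec u)) := hg _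
          rw [Matrix.mulVec_mulVec] at h4
          exact le_trans hφv h4
        · refine ⟨B, hB, ?_⟩
          have h4 : φ (B.mulVec (-u)) ≤ ν (P.mulVec (B.mulVec (-u))) := hg _
          have h5 : B.mulVec (-u) = -(B.mulVec u) := Matrix.mulVec_neg u B
          have h6 : ν (P.mulVec (B.mulVec (-u))) = ν ((P*B).mulVec u) := by
            rw [h5, Matrix.mulVec_neg, Matrix.mulVec_mulVec]
            have := hν.2.2.1 (-1) ((P*B).mulVec u)
            simpa using this
          rw [h6] at h4
          exact le_trans hφv h4
      obtain ⟨B, hB, hBineq⟩ := hmain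
      obtain ⟨lB, hlBlen, hlBmem, hlBprod⟩ := mem_prodsLe hB
      refine ⟨lB, hlBmem, hlBlen, ?_⟩
      rw [hlBprod]
      have hwu : (P*B).mulVec w = (ν w) • ((P*B).mulVec u) := by
        rw [← Matrix.mulVec_smul, hudef, smul_smul, mul_inv_cancel₀ hνw.ne', one_smul]
      have hnu2 : ν ((P*B).mulVec w) = ν w * ν ((P*B).mulVec u) := by
        rw [hwu, hν.2.2.1, abs_of_nonneg (hν.1 w)]
      rw [hnu2]
      calc χ * r * ν w = ν w * (χ * r) := by ring
        _ ≤ ν w * ν ((P*B).mulVec u) :=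
            mul_le_mul_of_nonneg_left hBineq (hν.1 w)
    -- per-cycle estimate
    have hcyc : ∀ q : ℕ, q ≤ p → (η * ρ)^(n + q) ≤ χ * r := by
      intro q hq
      have hηq : η^(n+q) ≤ μ := by
        rw [hηdef, ← Real.rpow_natCast (μ ^ (((n:ℝ)+p)⁻¹)) (n+q), ← Real.rpow_mul hμ0.le]
        nth_rewrite 2 [show μ = μ ^ (1:ℝ) by rw [Real.rpow_one]]
        apply Real.rpow_le_rpow_of_exponent_le hμ.le
        rw [inv_mul_le_iff₀ hnp, mul_one]
        push_cast
        have hqp : (q:ℝ) ≤ (p:ℝ) := by exact_mod_cast hq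
        linarith
      have hρq : ρ^(n+q) ≤ ρ^n * max 1 (ρ^p) := by
        rw [pow_add]
        apply mul_le_mul_of_nonneg_left _ (pow_nonneg hρpos.le n)
        rcases le_or_gt ρ 1 with h | h
        · exact le_trans (pow_le_one₀ hρpos.le h) (le_max_left _ _)
        · exact le_trans (pow_le_pow_right₀ h.le hq) (le_max_right _ _)
      have hstep : (η*ρ)^(n+q) ≤ μ * (ρ^n * max 1 (ρ^p)) := by
        rw [mul_pow]
        have h1 : (0:ℝ) ≤ ρ^(n+q) := pow_nonneg hρpos.le _
        have h2 : (0:ℝ) ≤ η^(n+q) := pow_nonneg hη0.le _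
        calc η^(n+q) * ρ^(n+q) ≤ μ * ρ^(n+q) := mul_le_mul_of_nonneg_right hηq h1
          _ ≤ μ * (ρ^n * max 1 (ρ^p)) := mul_le_mul_of_nonneg_left hρq hμ0.le
      have hfin : μ * (ρ^n * max 1 (ρ^p)) ≤ χ * r := by
        have h1 : χ * (μ * (max 1 (ρ^p) / χ) * ρ^n) = μ * (ρ^n * max 1 (ρ^p)) := by
          field_simp
        calc μ * (ρ^n * max 1 (ρ^p)) = χ * (μ * (max 1 (ρ^p) / χ) * ρ^n) := h1.symm
          _ ≤ χ * r := mul_le_mul_of_nonneg_left hrge hchi.le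
      exact le_trans hstep hfin
    -- main induction
    have main : ∀ k : ℕ, ∃ l : List (Matrix (Fin d) (Fin d) ℝ),
        (∀ A ∈ l, A ∈ 𝒜) ∧ k ≤ l.length ∧
        (η*ρ)^(l.length) * ν xstar ≤ ν (l.prod.mulVec xstar) := by
      intro k
      induction k with
      | zero =>
        refine ⟨[], by simp, by simp, ?_⟩
        simp [Matrix.one_mulVec]
      | succ k ih =>
        obtain ⟨l, hlmem, hllen, hlb⟩ := ih
        have hpow : 0 < (η*ρ)^l.length * ν xstar := by positivity
        have hwne : l.prod.mulVec xstar ≠ 0 := by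
          intro h
          rw [h, nu_zero hν] at hlb
          linarith
        obtain ⟨lB, hlBmem, hlBlen, hkey⟩ := key _ hwne
        refine ⟨lA ++ lB ++ l, ?_, ?_, ?_⟩
        · intro A hA
          simp only [List.mem_append] at hA
          rcases hA with (hA | hA) | hA
          · exact hlA A hA
          · exact hlBmem A hA
          · exact hlmem A hA
        · simp only [List.length_append, hlen]
          omega
        · have hprod : (lA ++ lB ++ l).prod = (P * lB.prod) * l.prod := by
            rw [List.prod_append, List.prod_append, hPdef]
          have hlen2 : (lA ++ lB ++ l).length = (n + lB.length) + l.length := by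
            simp only [List.length_append, hlen]
          rw [hprod, hlen2, ← Matrix.mulVec_mulVec, pow_add]
          calc (η*ρ)^(n + lB.length) * (η*ρ)^l.length * ν xstar
              = (η*ρ)^(n + lB.length) * ((η*ρ)^l.length * ν xstar) := by ring
            _ ≤ (χ * r) * ((η*ρ)^l.length * ν xstar) :=
                mul_le_mul_of_nonneg_right (hcyc _ hlBlen) hpow.le
            _ ≤ (χ * r) * ν (l.prod.mulVec xstar) :=
                mul_le_mul_of_nonneg_left hlb (by positivity)
            _ ≤ ν ((P * lB.prod).mulVec (l.prod.mulVec xstar)) := hkey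
    choose H h1 h2 h3 using main
    refine ⟨H, h1, ?_, ?_⟩
    · exact tendsto_atTop_mono h2 tendsto_id
    · intro k
      have h4 := h3 k
      have h5 : ν ((H k).prod.mulVec xstar) ≤ opNorm ν ((H k).prod) * ν xstar :=
        nu_mulVec_le hν hd0 _ _
      have h6 : (η*ρ)^(H k).length * ν xstar ≤ opNorm ν ((H k).prod) * ν xstar :=
        le_trans h4 h5
      exact le_of_mul_le_mul_right h6 hνx
end

section
/- For a finite bounded set 𝒜 of real d×d matrices with all matrices having nonnegative entries, and any n ≥ 1, the inequalities r^{−1/n} ρ(A₁^{⊗n} + ⋯ + A_r^{⊗n})^{1/n} ≤ ρ(𝒜) ≤ ρ(A₁^{⊗n} + ⋯ + A_r^{⊗n})^{1/n} hold, where A^{⊗n} denotes the n-fold Kronecker power of A. -/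
open Filter Set

/-- The spectral radius of a single real matrix: the maximum of the moduli of
its (complex) eigenvalues. -/
noncomputable def specRad {m : Type*} [Fintype m] [DecidableEq m]
    (A : Matrix m m ℝ) : ℝ :=
  (spectralRadius ℂ (A.map (algebraMap ℝ ℂ))).toReal

/-- The canonical operator norm of a matrix (induced by the sup norm on `ℝ^d`). -/
noncomputable def opNormC {d : ℕ} (A : Matrix (Fin d) (Fin d) ℝ) : ℝ :=
  ‖LinearMap.toContinuousLinearMap (Matrix.mulVecLin A)‖

/-- The `n`-fold Kronecker (tensor) power of a `d×d` matrix, realized as a matrix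
indexed by `Fin n → Fin d`. -/
noncomputable def kronPow {d : ℕ} (A : Matrix (Fin d) (Fin d) ℝ) (n : ℕ) :
    Matrix (Fin n → Fin d) (Fin n → Fin d) ℝ :=
  fun i j => ∏ k, A (i k) (j k)

/-! ### Auxiliary material -/

open scoped NNReal ENNReal Topology

attribute [local instance] Matrix.linftyOpNormedRing Matrix.linftyOpNormedAlgebra
  Matrix.linftyOpNormedSpace

section auxNorm
variable {ι : Type*} [Fintype ι] [DecidableEq ι]

lemma rowsum_le_norm' (M : Matrix ι ι ℝ) (i : ι) : ∑ j, ‖M i j‖ ≤ ‖M‖ := by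
  have h1 : (∑ j, ‖M i j‖₊ : ℝ≥0) ≤ ‖M‖₊ := by
    rw [Matrix.linfty_opNNNorm_def]
    exact Finset.le_sup (f := fun i => ∑ j, ‖M i j‖₊) (Finset.mem_univ i)
  calc ∑ j, ‖M i j‖ = ((∑ j, ‖M i j‖₊ : ℝ≥0) : ℝ) := by push_cast; rfl
  _ ≤ _ := h1

lemma entry_le_norm' (M : Matrix ι ι ℝ) (h : ∀ k l, 0 ≤ M k l) (i j : ι) : M i j ≤ ‖M‖ := by
  refine le_trans ?_ (rowsum_le_norm' M i)
  calc M i j = ‖M i j‖ := (Real.norm_of_nonneg (h i j)).symm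
  _ ≤ ∑ j', ‖M i j'‖ := Finset.single_le_sum (f := fun j' => ‖M i j'‖)
      (fun _ _ => norm_nonneg _) (Finset.mem_univ j)

lemma norm_le_of_rowsum' (M : Matrix ι ι ℝ) (b : ℝ) (hb : 0 ≤ b)
    (h : ∀ i, ∑ j, ‖M i j‖ ≤ b) : ‖M‖ ≤ b := by
  have : ‖M‖₊ ≤ b.toNNReal := by
    rw [Matrix.linfty_opNNNorm_def]
    refine Finset.sup_le fun i _ => ?_
    rw [← NNReal.coe_le_coe, Real.coe_toNNReal _ hb]
    calc ((∑ j, ‖M i j‖₊ : ℝ≥0) : ℝ) = ∑ j, ‖M i j‖ := by push_cast; rfl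
    _ ≤ b := h i
  calc ‖M‖ = (‖M‖₊ : ℝ) := rfl
  _ ≤ (b.toNNReal : ℝ) := this
  _ = b := Real.coe_toNNReal _ hb

/-- Gelfand formula, real linfty-norm version. -/
lemma gelfand_real' (M : Matrix ι ι ℝ) :
    Tendsto (fun m : ℕ => ‖M ^ m‖ ^ ((m : ℝ)⁻¹)) atTop (𝓝 (specRad M)) := by
  haveI : CompleteSpace (Matrix ι ι ℂ) := FiniteDimensional.complete ℂ _
  set a : Matrix ι ι ℂ := M.map (algebraMap ℝ ℂ) with ha
  have hpow : ∀ m : ℕ, a ^ m = (M ^ m).map (algebraMap ℝ ℂ) := by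
    intro m
    exact (map_pow ((algebraMap ℝ ℂ).mapMatrix) M m).symm
  have hnorm : ∀ X : Matrix ι ι ℝ, ‖X.map (algebraMap ℝ ℂ)‖₊ = ‖X‖₊ := by
    intro X
    rw [Matrix.linfty_opNNNorm_def, Matrix.linfty_opNNNorm_def]
    congr 1
    funext i
    congr 1
    funext j
    simp [Matrix.map_apply]
  have h := spectrum.pow_nnnorm_pow_one_div_tendsto_nhds_spectralRadius a
  have hfin : spectralRadius ℂ a ≠ ⊤ := by
    refine ne_top_of_le_ne_top ?_ (spectrum.spectralRadius_le_pow_nnnorm_pow_one_div ℂ a 0)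
    exact ENNReal.mul_ne_top (ENNReal.rpow_ne_top_of_nonneg (by norm_num) ENNReal.coe_ne_top)
      (ENNReal.rpow_ne_top_of_nonneg (by norm_num) ENNReal.coe_ne_top)
  have h2 := (ENNReal.tendsto_toReal hfin).comp h
  have heq : (fun m : ℕ => (((‖a ^ m‖₊ : ℝ≥0∞) ^ (1 / (m:ℕ) : ℝ)).toReal)) =
      fun m : ℕ => ‖M ^ m‖ ^ ((m : ℝ)⁻¹) := by
    funext m
    rw [← ENNReal.toReal_rpow, hpow, hnorm]
    simp [one_div]
  rw [Function.comp_def] at h2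
  rw [heq] at h2
  exact h2

end auxNorm

section auxKron
variable {d n : ℕ}

lemma kronPow_one' : kronPow (1 : Matrix (Fin d) (Fin d) ℝ) n = 1 := by
  funext i j
  simp only [kronPow, Matrix.one_apply]
  by_cases h : i = j
  · subst h; simp
  · rw [if_neg h]
    obtain ⟨k, hk⟩ := Function.ne_iff.mp h
    exact Finset.prod_eq_zero (Finset.mem_univ k) (if_neg hk)

lemma kronPow_mul' (A B : Matrix (Fin d) (Fin d) ℝ) :
    kronPow (A * B) n = kronPow A n * kronPow B n := by
  funext i j
  simp only [kronPow, Matrix.mul_apply]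
  rw [Finset.prod_univ_sum]
  congr 1
  funext f
  rw [← Finset.prod_mul_distrib]

lemma kronPow_nonneg' {A : Matrix (Fin d) (Fin d) ℝ} (h : ∀ k l, 0 ≤ A k l) (i j) :
    0 ≤ kronPow A n i j :=
  Finset.prod_nonneg fun _ _ => h _ _

/-- For a matrix with nonnegative entries, `‖A^{⊗n}‖ ≤ ‖A‖ ^ n` (linfty operator norm). -/
lemma norm_kronPow_le' {Q : Matrix (Fin d) (Fin d) ℝ} (h : ∀ k l, 0 ≤ Q k l) :
    ‖kronPow Q n‖ ≤ ‖Q‖ ^ n := by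
  refine norm_le_of_rowsum' _ _ (by positivity) fun i => ?_
  have hsum : ∑ j : Fin n → Fin d, kronPow Q n i j = ∏ k, ∑ x, Q (i k) x := by
    simp only [kronPow]
    rw [Finset.prod_univ_sum, Fintype.piFinset_univ]
  calc ∑ j, ‖kronPow Q n i j‖ = ∑ j, kronPow Q n i j :=
        Finset.sum_congr rfl fun j _ => Real.norm_of_nonneg (kronPow_nonneg' h _ _)
  _ = ∏ k, ∑ x, Q (i k) x := hsum
  _ ≤ ∏ _k : Fin n, ‖Q‖ := by
      refine Finset.prod_le_prod (fun k _ => Finset.sum_nonneg fun x _ => h _ _)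
        (fun k _ => ?_)
      calc ∑ x, Q (i k) x = ∑ x, ‖Q (i k) x‖ :=
            Finset.sum_congr rfl fun x _ => (Real.norm_of_nonneg (h _ _)).symm
      _ ≤ ‖Q‖ := rowsum_le_norm' Q (i k)
  _ = ‖Q‖ ^ n := by rw [Finset.prod_const, Finset.card_univ, Fintype.card_fin]

/-- word product -/
noncomputable def wp {d r : ℕ} (A : Fin r → Matrix (Fin d) (Fin d) ℝ) {m : ℕ}
    (w : Fin m → Fin r) : Matrix (Fin d) (Fin d) ℝ :=
  (List.ofFn fun k => A (w k)).prod

lemma wp_cons {r m : ℕ} (A : Fin r → Matrix (Fin d) (Fin d) ℝ) (i : Fin r)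
    (w : Fin m → Fin r) : wp A (Fin.cons i w) = A i * wp A w := by
  unfold wp
  rw [List.ofFn_succ]
  simp [Fin.cons_succ]

lemma wp_mem_prods {r m : ℕ} (A : Fin r → Matrix (Fin d) (Fin d) ℝ) (w : Fin m → Fin r) :
    wp A w ∈ prods (Set.range A) m := by
  refine ⟨List.ofFn fun k => A (w k), by simp, fun B hB => ?_, rfl⟩
  obtain ⟨k, hk⟩ := (List.mem_ofFn).mp hB
  exact ⟨w k, hk⟩

lemma prods_eq_wp {r m : ℕ} (A : Fin r → Matrix (Fin d) (Fin d) ℝ)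
    {P : Matrix (Fin d) (Fin d) ℝ} (hP : P ∈ prods (Set.range A) m) :
    ∃ w : Fin m → Fin r, wp A w = P := by
  obtain ⟨l, hlen, hmem, hprod⟩ := hP
  subst hlen
  choose w hw using fun k : Fin l.length => hmem (l.get k) (l.get_mem _)
  refine ⟨w, ?_⟩
  unfold wp
  rw [← hprod]
  congr 1
  conv_rhs => rw [← List.ofFn_get l]
  exact congrArg List.ofFn (funext fun k => hw k)

lemma hpos_aux {r : ℕ} {A : Fin r → Matrix (Fin d) (Fin d) ℝ}
    (hA : ∀ i k l, 0 ≤ A i k l) (i : Fin r) : ∀ k l, 0 ≤ A i k l := hA i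

lemma list_prod_nonneg : ∀ (l : List (Matrix (Fin d) (Fin d) ℝ)),
    (∀ B ∈ l, ∀ k l', 0 ≤ B k l') → ∀ k l', 0 ≤ l.prod k l'
  | [] => by
    intro _ k l'
    rw [List.prod_nil, Matrix.one_apply]
    split <;> norm_num
  | B :: t => by
    intro h k l'
    rw [List.prod_cons, Matrix.mul_apply]
    exact Finset.sum_nonneg fun x _ => mul_nonneg (h B List.mem_cons_self k x)
      (list_prod_nonneg t (fun B' hB' => h B' (List.mem_cons_of_mem _ hB')) x l')

lemma wp_nonneg {r m : ℕ} {A : Fin r → Matrix (Fin d) (Fin d) ℝ}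
    (hA : ∀ i k l, 0 ≤ A i k l) (w : Fin m → Fin r) (k l : Fin d) :
    0 ≤ wp A w k l := by
  refine list_prod_nonneg _ (fun B hB => ?_) k l
  obtain ⟨k', hk'⟩ := (List.mem_ofFn).mp hB
  exact hk' ▸ hpos_aux hA (w k')

lemma key_sum' {r : ℕ} (A : Fin r → Matrix (Fin d) (Fin d) ℝ) (m : ℕ) :
    (∑ i, kronPow (A i) n) ^ m = ∑ w : Fin m → Fin r, kronPow (wp A w) n := by
  induction m with
  | zero =>
    rw [pow_zero]
    rw [Fintype.sum_subsingleton _ (fun k : Fin 0 => k.elim0)]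
    unfold wp
    simp [kronPow_one']
  | succ m ih =>
    rw [pow_succ', ih, Finset.mul_sum]
    rw [← Equiv.sum_comp (Fin.consEquiv fun _ : Fin (m+1) => Fin r)
      (fun w => kronPow (wp A w) n), Fintype.sum_prod_type]
    simp_rw [Finset.sum_mul]
    rw [Finset.sum_comm]
    congr 1
    funext i
    congr 1
    funext w
    rw [← kronPow_mul',
      show (Fin.consEquiv fun _ : Fin (m+1) => Fin r) (i, w) = Fin.cons i w from rfl, wp_cons]

lemma opNormC_eq_norm {P : Matrix (Fin d) (Fin d) ℝ} : opNormC P = ‖P‖ := by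
  rw [opNormC, Matrix.linfty_opNorm_eq_opNorm]
  exact congrArg norm (ContinuousLinearMap.ext fun _ => rfl).symm

end auxKron

lemma norm_one_le' {d : ℕ} : ‖(1 : Matrix (Fin d) (Fin d) ℝ)‖ ≤ 1 := by
  rw [← Matrix.diagonal_one, Matrix.linfty_opNorm_diagonal]
  refine (pi_norm_le_iff_of_nonneg zero_le_one).mpr fun i => by norm_num

lemma pow_rpow_inv' {x : ℝ} (hx : 0 ≤ x) {m : ℕ} (hm : m ≠ 0) : (x ^ m) ^ ((m:ℝ)⁻¹) = x := by
  rw [← Real.rpow_natCast x m, ← Real.rpow_mul hx,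
    mul_inv_cancel₀ (Nat.cast_ne_zero.mpr hm), Real.rpow_one]

/-- for matrices with nonnegative entries,
`r^{−1/n} ρ(Σ Aᵢ^{⊗n})^{1/n} ≤ ρ(𝒜) ≤ ρ(Σ Aᵢ^{⊗n})^{1/n}`. -/
theorem statement19 {d : ℕ} (r : ℕ) (hr : 1 ≤ r)
    (A : Fin r → Matrix (Fin d) (Fin d) ℝ)
    (hpos : ∀ i k l, 0 ≤ A i k l)
    (n : ℕ) (hn : 1 ≤ n) :
    ((r : ℝ) ^ ((n : ℝ)⁻¹))⁻¹ * (specRad (∑ i, kronPow (A i) n)) ^ ((n : ℝ)⁻¹) ≤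
      jsr opNormC (Set.range A) ∧
    jsr opNormC (Set.range A) ≤ (specRad (∑ i, kronPow (A i) n)) ^ ((n : ℝ)⁻¹) := by
  have hn0 : n ≠ 0 := by omega
  have hN0 : ∀ {d' : ℕ} (P : Matrix (Fin d') (Fin d') ℝ), 0 ≤ opNormC P := by
    intro d' P
    rw [opNormC_eq_norm]
    exact norm_nonneg _
  rcases Nat.eq_zero_or_pos d with hd0 | hd
  · -- degenerate case `d = 0`
    subst hd0
    haveI hempty : IsEmpty (Fin n → Fin 0) := ⟨fun f => (f ⟨0, hn⟩).elim0⟩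
    haveI : Subsingleton (Matrix (Fin n → Fin 0) (Fin n → Fin 0) ℂ) :=
      ⟨fun a b => Matrix.ext fun i => isEmptyElim i⟩
    have hspec : specRad (∑ i, kronPow (A i) n) = 0 := by
      rw [specRad, spectralRadius]
      have : spectrum ℂ ((∑ i, kronPow (A i) n).map (algebraMap ℝ ℂ)) = ∅ := by
        ext z
        simp [spectrum.mem_iff, isUnit_of_subsingleton]
      rw [this]
      simp
    have hNzero : ∀ P : Matrix (Fin 0) (Fin 0) ℝ, opNormC P = 0 := by
      intro P
      have : P = 0 := by funext i j; exact i.elim0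
      rw [opNormC_eq_norm, this, norm_zero]
    have hsup0 : ∀ m, supN opNormC (Set.range A) m = 0 := by
      intro m
      refine le_antisymm (Real.sSup_le ?_ le_rfl) (Real.sSup_nonneg ?_) <;>
        rintro x ⟨P, _, rfl⟩ <;> rw [hNzero P]
    have hjsr : jsr opNormC (Set.range A) = 0 := by
      rw [jsr]
      have : (fun m : ℕ => supN opNormC (Set.range A) m ^ ((m:ℝ)⁻¹)) =ᶠ[atTop]
          (fun _ => (0:ℝ)) := by
        filter_upwards [eventually_ge_atTop 1] with m hm
        rw [hsup0, Real.zero_rpow (by positivity)]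
      rw [limsup_congr this, limsup_const]
    rw [hjsr, hspec, Real.zero_rpow (by positivity)]
    norm_num
  -- main case `0 < d`
  set S := ∑ i, kronPow (A i) n with hS
  have hSm : ∀ m (i j : Fin n → Fin d), 0 ≤ (S ^ m) i j := by
    intro m i j
    rw [hS, key_sum' A m, Matrix.sum_apply]
    exact Finset.sum_nonneg fun w _ => kronPow_nonneg' (wp_nonneg hpos w) _ _
  have hρ := gelfand_real' S
  set ρ := specRad S with hρdef
  have hρ0 : 0 ≤ ρ := ENNReal.toReal_nonneg
  -- `supN` basics
  have hbdd : ∀ m, BddAbove (opNormC '' prods (Set.range A) m) := by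
    intro m
    apply Set.Finite.bddAbove
    apply (Set.finite_range (fun w : Fin m → Fin r => opNormC (wp A w))).subset
    rintro x ⟨P, hP, rfl⟩
    obtain ⟨w, hw⟩ := prods_eq_wp A hP
    exact ⟨w, by dsimp only; rw [hw]⟩
  have hsup_ge : ∀ m (w : Fin m → Fin r), ‖wp A w‖ ≤ supN opNormC (Set.range A) m := by
    intro m w
    rw [← opNormC_eq_norm]
    exact le_csSup (hbdd m) ⟨_, wp_mem_prods A w, rfl⟩
  have hsup0 : ∀ m, 0 ≤ supN opNormC (Set.range A) m := by
    intro m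
    refine Real.sSup_nonneg ?_
    rintro x ⟨P, _, rfl⟩
    exact hN0 P
  set g := fun m : ℕ => supN opNormC (Set.range A) m ^ ((m:ℝ)⁻¹) with hg
  have hg0 : ∀ m, 0 ≤ g m := fun m => Real.rpow_nonneg (hsup0 m) _
  set K := 1 + ∑ i, ‖A i‖ with hK
  have hK1 : (1:ℝ) ≤ K := le_add_of_nonneg_right (Finset.sum_nonneg fun _ _ => norm_nonneg _)
  have hK0 : (0:ℝ) ≤ K := zero_le_one.trans hK1
  have hAK : ∀ i, ‖A i‖ ≤ K := by
    intro i
    calc ‖A i‖ ≤ ∑ j, ‖A j‖ := Finset.single_le_sum (fun _ _ => norm_nonneg _) (Finset.mem_univ i)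
    _ ≤ K := le_add_of_nonneg_left zero_le_one
  have hwpK : ∀ m (w : Fin m → Fin r), ‖wp A w‖ ≤ K ^ m := by
    intro m
    induction m with
    | zero =>
      intro w
      have h1 : wp A w = 1 := by unfold wp; simp
      rw [h1, pow_zero]
      exact norm_one_le'
    | succ m ih =>
      intro w
      rw [← Fin.cons_self_tail w, wp_cons]
      calc ‖A (w 0) * wp A (Fin.tail w)‖ ≤ ‖A (w 0)‖ * ‖wp A (Fin.tail w)‖ := norm_mul_le _ _
      _ ≤ K * K ^ m := mul_le_mul (hAK _) (ih _) (norm_nonneg _) hK0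
      _ = K ^ (m+1) := (pow_succ' K m).symm
  have hsupK : ∀ m, supN opNormC (Set.range A) m ≤ K ^ m := by
    intro m
    refine Real.sSup_le ?_ (pow_nonneg hK0 m)
    rintro x ⟨P, hP, rfl⟩
    obtain ⟨w, hw⟩ := prods_eq_wp A hP
    rw [opNormC_eq_norm, ← hw]
    exact hwpK m w
  have hgK : ∀ m, g m ≤ K := by
    intro m
    rcases Nat.eq_zero_or_pos m with h0 | hm
    · subst h0
      simp only [hg, Nat.cast_zero, inv_zero, Real.rpow_zero]
      exact hK1
    · calc g m ≤ (K ^ m) ^ ((m:ℝ)⁻¹) :=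
            Real.rpow_le_rpow (hsup0 m) (hsupK m) (by positivity)
      _ = K := pow_rpow_inv' hK0 (by omega)
  have hgbdd : IsBoundedUnder (· ≤ ·) atTop g := isBoundedUnder_of ⟨K, hgK⟩
  have hgcob : IsCoboundedUnder (· ≤ ·) atTop g :=
    (isBoundedUnder_of ⟨0, hg0⟩ : IsBoundedUnder (· ≥ ·) atTop g).isCoboundedUnder_flip
  have hjsr_eq : jsr opNormC (Set.range A) = limsup g atTop := rfl
  have hJ0 : 0 ≤ limsup g atTop := le_limsup_of_frequently_le (Frequently.of_forall hg0) hgbdd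
  -- upper bound
  have hsup_le_norm : ∀ m, supN opNormC (Set.range A) m ≤ d * ‖S ^ m‖ ^ ((n:ℝ)⁻¹) := by
    intro m
    have hB0 : (0:ℝ) ≤ ‖S ^ m‖ ^ ((n:ℝ)⁻¹) := Real.rpow_nonneg (norm_nonneg _) _
    refine Real.sSup_le ?_ (by positivity)
    rintro x ⟨P, hP, rfl⟩
    obtain ⟨w, hw⟩ := prods_eq_wp A hP
    rw [opNormC_eq_norm, ← hw]
    have hPnn := wp_nonneg hpos w
    have hentry : ∀ k l, wp A w k l ≤ ‖S ^ m‖ ^ ((n:ℝ)⁻¹) := by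
      intro k l
      have h1 : wp A w k l ^ n = kronPow (wp A w) n (fun _ => k) (fun _ => l) := by
        simp [kronPow, Finset.prod_const, Finset.card_univ]
      have h2 : kronPow (wp A w) n (fun _ => k) (fun _ => l) ≤
          (S ^ m) (fun _ => k) (fun _ => l) := by
        rw [hS, key_sum' A m, Matrix.sum_apply]
        exact Finset.single_le_sum (f := fun w' => kronPow (wp A w') n _ _)
          (fun w' _ => kronPow_nonneg' (wp_nonneg hpos w') _ _) (Finset.mem_univ w)
      have h4 : wp A w k l ^ n ≤ ‖S ^ m‖ := by
        rw [h1]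
        exact h2.trans (entry_le_norm' _ (hSm m) _ _)
      calc wp A w k l = (wp A w k l ^ n) ^ ((n:ℝ)⁻¹) := (pow_rpow_inv' (hPnn _ _) hn0).symm
      _ ≤ ‖S ^ m‖ ^ ((n:ℝ)⁻¹) := Real.rpow_le_rpow (pow_nonneg (hPnn _ _) n) h4 (by positivity)
    refine norm_le_of_rowsum' _ _ (by positivity) fun i => ?_
    calc ∑ j, ‖wp A w i j‖ = ∑ j, wp A w i j :=
          Finset.sum_congr rfl fun j _ => Real.norm_of_nonneg (hPnn _ _)
    _ ≤ ∑ _j : Fin d, ‖S ^ m‖ ^ ((n:ℝ)⁻¹) := Finset.sum_le_sum fun j _ => hentry i j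
    _ = d * ‖S ^ m‖ ^ ((n:ℝ)⁻¹) := by
        rw [Finset.sum_const, Finset.card_univ, Fintype.card_fin, nsmul_eq_mul]
  set h := fun m : ℕ => (d:ℝ) ^ ((m:ℝ)⁻¹) * (‖S ^ m‖ ^ ((m:ℝ)⁻¹)) ^ ((n:ℝ)⁻¹) with hh
  have hgh : ∀ᶠ m in atTop, g m ≤ h m := by
    filter_upwards [eventually_ge_atTop 1] with m hm
    calc g m ≤ (d * ‖S ^ m‖ ^ ((n:ℝ)⁻¹)) ^ ((m:ℝ)⁻¹) :=
          Real.rpow_le_rpow (hsup0 m) (hsup_le_norm m) (by positivity)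
    _ = (d:ℝ) ^ ((m:ℝ)⁻¹) * (‖S ^ m‖ ^ ((n:ℝ)⁻¹)) ^ ((m:ℝ)⁻¹) :=
          Real.mul_rpow (by positivity) (by positivity)
    _ = h m := by
        rw [hh]
        congr 1
        rw [← Real.rpow_mul (norm_nonneg _), mul_comm ((n:ℝ)⁻¹),
          Real.rpow_mul (norm_nonneg _)]
  have hT1 : Tendsto (fun m : ℕ => (d:ℝ) ^ ((m:ℝ)⁻¹)) atTop (𝓝 1) := by
    have hd' : (d:ℝ) ≠ 0 := Nat.cast_ne_zero.mpr (by omega)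
    have := (Real.continuousAt_const_rpow (b := 0) hd').tendsto.comp
      tendsto_inv_atTop_nhds_zero_nat
    simpa [Function.comp_def, Real.rpow_zero] using this
  have hT2 : Tendsto (fun m : ℕ => (‖S ^ m‖ ^ ((m:ℝ)⁻¹)) ^ ((n:ℝ)⁻¹)) atTop
      (𝓝 (ρ ^ ((n:ℝ)⁻¹))) := by
    have hc : ContinuousAt (fun x : ℝ => x ^ ((n:ℝ)⁻¹)) ρ :=
      Real.continuousAt_rpow_const _ _ (Or.inr (by positivity))
    exact hc.tendsto.comp hρ
  have hTh : Tendsto h atTop (𝓝 (1 * ρ ^ ((n:ℝ)⁻¹))) := hT1.mul hT2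
  have hupper : limsup g atTop ≤ ρ ^ ((n:ℝ)⁻¹) := by
    have := limsup_le_limsup hgh hgcob hTh.isBoundedUnder_le
    rwa [hTh.limsup_eq, one_mul] at this
  -- lower bound
  have hnormSm : ∀ m, ‖S ^ m‖ ≤ (r:ℝ) ^ m * supN opNormC (Set.range A) m ^ n := by
    intro m
    rw [hS, key_sum' A m]
    calc ‖∑ w : Fin m → Fin r, kronPow (wp A w) n‖ ≤ ∑ w, ‖kronPow (wp A w) n‖ :=
          norm_sum_le _ _
    _ ≤ ∑ _w : Fin m → Fin r, supN opNormC (Set.range A) m ^ n := by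
        refine Finset.sum_le_sum fun w _ => ?_
        calc ‖kronPow (wp A w) n‖ ≤ ‖wp A w‖ ^ n := norm_kronPow_le' (wp_nonneg hpos w)
        _ ≤ _ := pow_le_pow_left₀ (norm_nonneg _) (hsup_ge m w) n
    _ = (r:ℝ) ^ m * supN opNormC (Set.range A) m ^ n := by
        rw [Finset.sum_const, Finset.card_univ, Fintype.card_fun, Fintype.card_fin,
          Fintype.card_fin, nsmul_eq_mul]
        push_cast
        ring
  set ψ := fun x : ℝ => (r:ℝ) * (max x 0) ^ n with hψ
  have hψmono : Monotone ψ := by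
    intro x y hxy
    exact mul_le_mul_of_nonneg_left
      (pow_le_pow_left₀ (le_max_right _ _) (max_le_max hxy le_rfl) n) (by positivity)
  have hψcont : Continuous ψ := continuous_const.mul ((continuous_id.max continuous_const).pow n)
  have hψg : ∀ m, ψ (g m) = (r:ℝ) * g m ^ n := by
    intro m
    rw [hψ]
    dsimp only
    rw [max_eq_left (hg0 m)]
  have hev : ∀ᶠ m : ℕ in atTop, ‖S ^ m‖ ^ ((m:ℝ)⁻¹) ≤ (ψ ∘ g) m := by
    filter_upwards [eventually_ge_atTop 1] with m hm
    rw [Function.comp_apply, hψg]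
    calc ‖S ^ m‖ ^ ((m:ℝ)⁻¹) ≤ ((r:ℝ) ^ m * supN opNormC (Set.range A) m ^ n) ^ ((m:ℝ)⁻¹) :=
          Real.rpow_le_rpow (norm_nonneg _) (hnormSm m) (by positivity)
    _ = ((r:ℝ) ^ m) ^ ((m:ℝ)⁻¹) * (supN opNormC (Set.range A) m ^ n) ^ ((m:ℝ)⁻¹) :=
          Real.mul_rpow (by positivity) (pow_nonneg (hsup0 m) n)
    _ = (r:ℝ) * g m ^ n := by
        congr 1
        · exact pow_rpow_inv' (by positivity) (by omega)
        · rw [← Real.rpow_natCast (supN opNormC (Set.range A) m) n,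
            ← Real.rpow_mul (hsup0 m), mul_comm, Real.rpow_mul (hsup0 m), Real.rpow_natCast]
  have hlsnn : IsCoboundedUnder (· ≤ ·) atTop (fun m : ℕ => ‖S ^ m‖ ^ ((m:ℝ)⁻¹)) :=
    (isBoundedUnder_of ⟨0, fun m => Real.rpow_nonneg (norm_nonneg _) _⟩ :
      IsBoundedUnder (· ≥ ·) atTop _).isCoboundedUnder_flip
  have hψbdd : IsBoundedUnder (· ≤ ·) atTop (ψ ∘ g) :=
    isBoundedUnder_of ⟨ψ K, fun m => hψmono (hgK m)⟩
  have hlow1 : ρ ≤ limsup (ψ ∘ g) atTop := by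
    rw [← hρ.limsup_eq]
    exact limsup_le_limsup hev hlsnn hψbdd
  have hmap : ψ (limsup g atTop) = limsup (ψ ∘ g) atTop :=
    hψmono.map_limsup_of_continuousAt g hψcont.continuousAt hgbdd hgcob
  have hlow2 : ρ ≤ (r:ℝ) * (limsup g atTop) ^ n := by
    rw [← hmap] at hlow1
    have hx : ψ (limsup g atTop) = (r:ℝ) * (limsup g atTop) ^ n := by
      rw [hψ]
      dsimp only
      rw [max_eq_left hJ0]
    rwa [hx] at hlow1
  have hrpos : (0:ℝ) < (r:ℝ) ^ ((n:ℝ)⁻¹) :=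
    Real.rpow_pos_of_pos (by exact_mod_cast Nat.pos_of_ne_zero (by omega)) _
  have hfinal : ρ ^ ((n:ℝ)⁻¹) ≤ (r:ℝ) ^ ((n:ℝ)⁻¹) * limsup g atTop := by
    calc ρ ^ ((n:ℝ)⁻¹) ≤ ((r:ℝ) * (limsup g atTop) ^ n) ^ ((n:ℝ)⁻¹) :=
          Real.rpow_le_rpow hρ0 hlow2 (by positivity)
    _ = (r:ℝ) ^ ((n:ℝ)⁻¹) * ((limsup g atTop) ^ n) ^ ((n:ℝ)⁻¹) :=
          Real.mul_rpow (by positivity) (by positivity)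
    _ = _ := by rw [pow_rpow_inv' hJ0 hn0]
  constructor
  · rw [hjsr_eq, inv_mul_le_iff₀ hrpos]
    exact hfinal
  · rw [hjsr_eq]
    exact hupper
end
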